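/- arXiv:2605.15416 — 3 statements merged into one kernel-verified Lean document; each statement's English description precedes it below -/
import Mathlib

section
/- Let D be a probability measure on X × Y, f : X → Y a measurable judge, and C : X → ℝ a measurable confidence function, and fix δ ∈ (0,1), α ∈ (0,1). For λ ∈ ℝ with D({(x,y) : C(x) ≥ λ}) > 0, define the selective risk R(λ) = D(f(x) ≠ y | C(x) ≥ λ). Draw m i.i.d. calibration samples (x_1, y_1), …, (x_m, y_m) from D; let S_λ = {i : C(x_i) ≥ λ}, let R̂(λ) be the fraction of i ∈ S_λ with f(x_i) ≠ y_i, and let R̂⁺(λ) = sup{ R ∈ [0,1] : P( Binomial(|S_λ|, R) ≤ ⌈|S_λ| R̂(λ)⌉ ) ≥ δ }. Fix a finite decreasing grid Λ = {λ_1 > λ_2 > ⋯ > λ_T} and define λ̂ = min{ λ ∈ Λ : R̂⁺(λ') ≤ α for all λ' ∈ Λ with λ' ≥ λ } whenever this set is nonempty. Then, with probability at least 1 − δ over the calibration sample, either no threshold is selected or D( f(x) = y | C(x) ≥ λ̂ ) ≥ 1 − α. -/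
open MeasureTheory ProbabilityTheory
open scoped ENNReal NNReal

/-- `binCDF n r k = P(Binomial(n, r) ≤ k) = ∑_{j=0}^k C(n,j) r^j (1-r)^{n-j}`. -/
noncomputable def binCDF (n : ℕ) (r : ℝ) (k : ℕ) : ℝ :=
  ∑ j ∈ Finset.range (k + 1), (n.choose j : ℝ) * r ^ j * (1 - r) ^ (n - j)

/-- Number of calibration points with confidence at least `lam`. -/
noncomputable def nSel {X Y : Type*} (C : X → ℝ) (m : ℕ) (ω : Fin m → X × Y)
    (lam : ℝ) : ℕ :=
  Set.ncard {i : Fin m | lam ≤ C (ω i).1}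

/-- Empirical selective disagreement risk `R̂(lam)`. -/
noncomputable def Rhat {X Y : Type*} (f : X → Y) (C : X → ℝ) (m : ℕ)
    (ω : Fin m → X × Y) (lam : ℝ) : ℝ :=
  (Set.ncard {i : Fin m | lam ≤ C (ω i).1 ∧ f (ω i).1 ≠ (ω i).2} : ℝ) /
    (nSel C m ω lam : ℝ)

/-- Exact binomial upper confidence bound `R̂⁺(lam)`. -/
noncomputable def RhatPlus {X Y : Type*} (f : X → Y) (C : X → ℝ) (δ : ℝ) (m : ℕ)
    (ω : Fin m → X × Y) (lam : ℝ) : ℝ :=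
  sSup {R : ℝ | R ∈ Set.Icc (0 : ℝ) 1 ∧
    δ ≤ binCDF (nSel C m ω lam) R ⌈(nSel C m ω lam : ℝ) * Rhat f C m ω lam⌉₊}

lemma binCDF_nonneg_term {n : ℕ} {p : ℝ} (hp0 : 0 ≤ p) (hp1 : p ≤ 1) (j : ℕ) :
    0 ≤ (n.choose j : ℝ) * p ^ j * (1 - p) ^ (n - j) := by
  have : (0:ℝ) ≤ 1 - p := by linarith
  positivity

lemma binCDF_mono {n : ℕ} {p : ℝ} (hp0 : 0 ≤ p) (hp1 : p ≤ 1) {k k' : ℕ} (h : k ≤ k') :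
    binCDF n p k ≤ binCDF n p k' := by
  apply Finset.sum_le_sum_of_subset_of_nonneg
  · exact Finset.range_subset_range.2 (by omega)
  · exact fun j _ _ => binCDF_nonneg_term hp0 hp1 j

lemma binCDF_zero {p : ℝ} : binCDF 0 p 0 = 1 := by
  simp [binCDF]

lemma tail_le {n : ℕ} {p δ : ℝ} (hp0 : 0 ≤ p) (hp1 : p ≤ 1) (hδ0 : 0 ≤ δ) :
    ∑ k ∈ Finset.range (n + 1),
      (if binCDF n p k < δ then (n.choose k : ℝ) * p ^ k * (1 - p) ^ (n - k) else 0) ≤ δ := by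
  classical
  rw [← Finset.sum_filter]
  set Bad := (Finset.range (n + 1)).filter (fun k => binCDF n p k < δ) with hBad
  rcases Bad.eq_empty_or_nonempty with h | h
  · simp [h, hδ0]
  · set k0 := Bad.max' h with hk0
    have hk0mem : k0 ∈ Bad := Bad.max'_mem h
    have hk0bad : binCDF n p k0 < δ := (Finset.mem_filter.1 hk0mem).2
    have hsub : Bad ⊆ Finset.range (k0 + 1) := by
      intro k hk
      exact Finset.mem_range.2 (Nat.lt_succ_of_le (Finset.le_max' _ _ hk))
    calc ∑ k ∈ Bad, (n.choose k : ℝ) * p ^ k * (1 - p) ^ (n - k)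
        ≤ ∑ k ∈ Finset.range (k0 + 1), (n.choose k : ℝ) * p ^ k * (1 - p) ^ (n - k) :=
          Finset.sum_le_sum_of_subset_of_nonneg hsub (fun j _ _ => binCDF_nonneg_term hp0 hp1 j)
      _ = binCDF n p k0 := rfl
      _ ≤ δ := hk0bad.le

lemma count_bound {Z : Type*} [MeasurableSpace Z] (μ : Measure Z) [IsProbabilityMeasure μ]
    (s0 s1 : Set Z) (h0 : MeasurableSet s0) (h1 : MeasurableSet s1)
    (m : ℕ) (p δ : ℝ) (hp0 : 0 ≤ p) (hp1 : p ≤ 1) (hδ0 : 0 ≤ δ)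
    (ha : (μ s0).toReal = p * (μ (s0 ∪ s1)).toReal)
    (hb : (μ s1).toReal = (1 - p) * (μ (s0 ∪ s1)).toReal) :
    (Measure.pi fun _ : Fin m => μ)
      {ω : Fin m → Z | binCDF (Set.ncard {i | ω i ∈ s0 ∪ s1}) p (Set.ncard {i | ω i ∈ s0}) < δ}
      ≤ ENNReal.ofReal δ := by
  classical
  set q : ℝ := (μ (s0 ∪ s1)).toReal with hq
  set c : ℝ := (μ (s0 ∪ s1)ᶜ).toReal with hc
  have hq0 : 0 ≤ q := ENNReal.toReal_nonneg
  have hc0 : 0 ≤ c := ENNReal.toReal_nonneg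
  have hqc : q + c = 1 := by
    have h := measure_add_measure_compl (μ := μ) (h0.union h1)
    have := congrArg ENNReal.toReal h
    rwa [ENNReal.toReal_add (measure_ne_top _ _) (measure_ne_top _ _), measure_univ,
      ENNReal.toReal_one] at this
  -- cylinder sets
  set t : Finset (Fin m) → Finset (Fin m) → Fin m → Set Z := fun T U i =>
    if i ∈ U then s0 else if i ∈ T then s1 else (s0 ∪ s1)ᶜ with ht
  -- subset step
  have hsub : {ω : Fin m → Z |
        binCDF (Set.ncard {i | ω i ∈ s0 ∪ s1}) p (Set.ncard {i | ω i ∈ s0}) < δ} ⊆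
      ⋃ T ∈ (Finset.univ : Finset (Fin m)).powerset, ⋃ U ∈ T.powerset,
        (if binCDF T.card p U.card < δ then {ω : Fin m → Z | ∀ i, ω i ∈ t T U i} else ∅) := by
    intro ω hω
    set T : Finset (Fin m) := Finset.univ.filter (fun i => ω i ∈ s0 ∪ s1) with hT
    set U : Finset (Fin m) := Finset.univ.filter (fun i => ω i ∈ s0) with hU
    have hUT : U ⊆ T := by
      intro i hi
      simp only [hU, hT, Finset.mem_filter, Finset.mem_univ, true_and] at hi ⊢
      exact Or.inl hi
    have hcard1 : Set.ncard {i | ω i ∈ s0 ∪ s1} = T.card := by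
      rw [hT]; rw [← Set.ncard_coe_finset]; congr 1; ext i; simp
    have hcard2 : Set.ncard {i | ω i ∈ s0} = U.card := by
      rw [hU]; rw [← Set.ncard_coe_finset]; congr 1; ext i; simp
    refine Set.mem_biUnion (Finset.mem_powerset.2 (Finset.subset_univ T)) ?_
    refine Set.mem_biUnion (Finset.mem_powerset.2 hUT) ?_
    rw [if_pos (by rw [← hcard1, ← hcard2]; exact hω)]
    intro i
    simp only [ht]
    by_cases hiU : i ∈ U
    · rw [if_pos hiU]
      exact (Finset.mem_filter.1 hiU).2
    · rw [if_neg hiU]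
      by_cases hiT : i ∈ T
      · rw [if_pos hiT]
        have h1 : ω i ∈ s0 ∪ s1 := (Finset.mem_filter.1 hiT).2
        have h2 : ω i ∉ s0 := fun h => hiU (Finset.mem_filter.2 ⟨Finset.mem_univ _, h⟩)
        rcases h1 with h | h
        · exact absurd h h2
        · exact h
      · rw [if_neg hiT]
        exact fun h => hiT (Finset.mem_filter.2 ⟨Finset.mem_univ _, h⟩)
  -- measure of cylinders
  have hcyl : ∀ T U : Finset (Fin m), U ⊆ T →
      (Measure.pi fun _ : Fin m => μ) {ω : Fin m → Z | ∀ i, ω i ∈ t T U i} =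
        (μ s0) ^ U.card * (μ s1) ^ (T.card - U.card) * (μ (s0 ∪ s1)ᶜ) ^ (m - T.card) := by
    intro T U hUT
    have : {ω : Fin m → Z | ∀ i, ω i ∈ t T U i} = Set.pi Set.univ (t T U) := by
      ext ω; simp [Set.mem_pi]
    rw [this, Measure.pi_pi]
    rw [← Finset.prod_sdiff (Finset.subset_univ T), ← Finset.prod_sdiff hUT]
    have e1 : ∀ i ∈ Finset.univ \ T, μ (t T U i) = μ (s0 ∪ s1)ᶜ := by
      intro i hi
      have hiT : i ∉ T := (Finset.mem_sdiff.1 hi).2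
      have hiU : i ∉ U := fun h => hiT (hUT h)
      simp [ht, hiT, hiU]
    have e2 : ∀ i ∈ T \ U, μ (t T U i) = μ s1 := by
      intro i hi
      have h := Finset.mem_sdiff.1 hi
      simp [ht, h.1, h.2]
    have e3 : ∀ i ∈ U, μ (t T U i) = μ s0 := by
      intro i hi; simp [ht, hi]
    rw [Finset.prod_congr rfl e1, Finset.prod_congr rfl e2, Finset.prod_congr rfl e3,
      Finset.prod_const, Finset.prod_const, Finset.prod_const,
      Finset.card_sdiff_of_subset (Finset.subset_univ T), Finset.card_sdiff_of_subset hUT, Finset.card_univ,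
      Fintype.card_fin]
    ring
  calc (Measure.pi fun _ : Fin m => μ)
        {ω : Fin m → Z | binCDF (Set.ncard {i | ω i ∈ s0 ∪ s1}) p (Set.ncard {i | ω i ∈ s0}) < δ}
      ≤ (Measure.pi fun _ : Fin m => μ)
        (⋃ T ∈ (Finset.univ : Finset (Fin m)).powerset, ⋃ U ∈ T.powerset,
          (if binCDF T.card p U.card < δ then {ω : Fin m → Z | ∀ i, ω i ∈ t T U i} else ∅)) :=
        measure_mono hsub
    _ ≤ ∑ T ∈ (Finset.univ : Finset (Fin m)).powerset, (Measure.pi fun _ : Fin m => μ)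
          (⋃ U ∈ T.powerset,
            (if binCDF T.card p U.card < δ then {ω : Fin m → Z | ∀ i, ω i ∈ t T U i} else ∅)) :=
        measure_biUnion_finset_le _ _
    _ ≤ ∑ T ∈ (Finset.univ : Finset (Fin m)).powerset, ∑ U ∈ T.powerset,
          (Measure.pi fun _ : Fin m => μ)
            (if binCDF T.card p U.card < δ then {ω : Fin m → Z | ∀ i, ω i ∈ t T U i} else ∅) :=
        Finset.sum_le_sum (fun T _ => measure_biUnion_finset_le _ _)
    _ ≤ ENNReal.ofReal δ := by
        -- rewrite each term as ofReal of a real number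
        have hterm : ∀ T ∈ (Finset.univ : Finset (Fin m)).powerset, ∀ U ∈ T.powerset,
            (Measure.pi fun _ : Fin m => μ)
              (if binCDF T.card p U.card < δ then {ω : Fin m → Z | ∀ i, ω i ∈ t T U i} else ∅) =
            ENNReal.ofReal (if binCDF T.card p U.card < δ then
              (μ s0).toReal ^ U.card * (μ s1).toReal ^ (T.card - U.card) *
                c ^ (m - T.card) else 0) := by
          intro T _ U hU
          by_cases hb : binCDF T.card p U.card < δ
          · rw [if_pos hb, if_pos hb, hcyl T U (Finset.mem_powerset.1 hU)]
            rw [ENNReal.ofReal_mul (by positivity), ENNReal.ofReal_mul (by positivity),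
              ENNReal.ofReal_pow ENNReal.toReal_nonneg, ENNReal.ofReal_pow ENNReal.toReal_nonneg,
              ENNReal.ofReal_pow ENNReal.toReal_nonneg,
              ENNReal.ofReal_toReal (measure_ne_top _ _), ENNReal.ofReal_toReal (measure_ne_top _ _),
              ENNReal.ofReal_toReal (measure_ne_top _ _)]
          · rw [if_neg hb, if_neg hb, ENNReal.ofReal_zero, measure_empty]
        rw [Finset.sum_congr rfl (fun T hT => Finset.sum_congr rfl (fun U hU => hterm T hT U hU))]
        rw [Finset.sum_congr rfl (fun T (hT : T ∈ _) =>
          (ENNReal.ofReal_sum_of_nonneg (fun U _ => by positivity)).symm)]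
        rw [← ENNReal.ofReal_sum_of_nonneg (fun T _ => Finset.sum_nonneg (fun U _ => by positivity))]
        apply ENNReal.ofReal_le_ofReal
        -- now the real inequality
        have inner : ∀ T : Finset (Fin m),
            ∑ U ∈ T.powerset, (if binCDF T.card p U.card < δ then
              (μ s0).toReal ^ U.card * (μ s1).toReal ^ (T.card - U.card) * c ^ (m - T.card) else 0)
            ≤ δ * q ^ T.card * c ^ (m - T.card) := by
          intro T
          set n := T.card with hn
          have grp := Finset.sum_powerset_apply_card (x := T)
            (f := fun k => if binCDF n p k < δ then
              (μ s0).toReal ^ k * (μ s1).toReal ^ (n - k) * c ^ (m - n) else 0)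
          rw [grp]
          have step : ∀ k ∈ Finset.range (n + 1),
              n.choose k • (if binCDF n p k < δ then
                (μ s0).toReal ^ k * (μ s1).toReal ^ (n - k) * c ^ (m - n) else 0)
              = (if binCDF n p k < δ then (n.choose k : ℝ) * p ^ k * (1 - p) ^ (n - k) else 0)
                * (q ^ n * c ^ (m - n)) := by
            intro k hk
            have hkn : k ≤ n := Nat.lt_succ_iff.1 (Finset.mem_range.1 hk)
            rw [nsmul_eq_mul]
            by_cases hbad : binCDF n p k < δ
            · rw [if_pos hbad, if_pos hbad, ha, hb]
              have hqn : q ^ k * q ^ (n - k) = q ^ n := by rw [← pow_add]; congr 1; omega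
              rw [mul_pow, mul_pow, ← hqn]; ring
            · simp [hbad]
          rw [Finset.sum_congr rfl step, ← Finset.sum_mul]
          have := tail_le (n := n) hp0 hp1 hδ0
          calc (∑ k ∈ Finset.range (n + 1),
                (if binCDF n p k < δ then (n.choose k : ℝ) * p ^ k * (1 - p) ^ (n - k) else 0))
                * (q ^ n * c ^ (m - n))
              ≤ δ * (q ^ n * c ^ (m - n)) := by
                apply mul_le_mul_of_nonneg_right this (by positivity)
            _ = δ * q ^ n * c ^ (m - n) := by ring
        calc ∑ T ∈ (Finset.univ : Finset (Fin m)).powerset, ∑ U ∈ T.powerset,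
              (if binCDF T.card p U.card < δ then
                (μ s0).toReal ^ U.card * (μ s1).toReal ^ (T.card - U.card) * c ^ (m - T.card) else 0)
            ≤ ∑ T ∈ (Finset.univ : Finset (Fin m)).powerset, δ * q ^ T.card * c ^ (m - T.card) :=
              Finset.sum_le_sum (fun T _ => inner T)
          _ = δ := by
              have grp := Finset.sum_powerset_apply_card (x := (Finset.univ : Finset (Fin m)))
                (f := fun k => δ * q ^ k * c ^ (m - k))
              rw [grp]
              simp only [Finset.card_univ, Fintype.card_fin, nsmul_eq_mul]
              have := add_pow (R := ℝ) q c m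
              rw [hqc, one_pow] at this
              calc ∑ k ∈ Finset.range (m + 1), (m.choose k : ℝ) * (δ * q ^ k * c ^ (m - k))
                  = δ * ∑ k ∈ Finset.range (m + 1), q ^ k * c ^ (m - k) * (m.choose k : ℝ) := by
                    rw [Finset.mul_sum]; apply Finset.sum_congr rfl; intro k _; ring
                _ = δ * 1 := by rw [← this]
                _ = δ := mul_one δ

/-- Theorem 2.1 (human-agreement guarantee of fixed-sequence testing): with
probability at least `1 - δ` over the calibration sample, either no threshold in
the grid `Λ` is selected, or the selected threshold `λ̂` (the least grid point such
that all tests at larger grid points pass) satisfies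
`D(f(x) = y | C(x) ≥ λ̂) ≥ 1 - α`. -/
theorem stmt3 {X Y : Type*} [MeasurableSpace X] [MeasurableSpace Y]
    (D : Measure (X × Y)) [IsProbabilityMeasure D]
    (f : X → Y) (hf : Measurable f) (C : X → ℝ) (hC : Measurable C)
    (δ α : ℝ) (hδ : δ ∈ Set.Ioo (0 : ℝ) 1) (hα : α ∈ Set.Ioo (0 : ℝ) 1)
    (Λ : Finset ℝ) (hpos : ∀ lam ∈ Λ, 0 < D {p : X × Y | lam ≤ C p.1})
    (m : ℕ) (hm : 0 < m) :
    ENNReal.ofReal (1 - δ) ≤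
      (Measure.pi fun _ : Fin m => D)
        {ω : Fin m → X × Y |
          ∀ lamhat : ℝ,
            IsLeast {lam | lam ∈ Λ ∧
                ∀ lam' ∈ Λ, lam ≤ lam' → RhatPlus f C δ m ω lam' ≤ α} lamhat →
            ENNReal.ofReal (1 - α) ≤
              D[|{p : X × Y | lamhat ≤ C p.1}] {p : X × Y | f p.1 = p.2}} := by
  classical
  obtain ⟨hδ0, hδ1⟩ := hδ
  obtain ⟨hα0, hα1⟩ := hα
  set Dm : Measure (Fin m → X × Y) := Measure.pi fun _ : Fin m => D with hDm
  have hDmprob : IsProbabilityMeasure Dm := by rw [hDm]; infer_instance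
  set agree : Set (X × Y) := {p : X × Y | f p.1 = p.2} with hagree
  by_cases hall : ∀ lam ∈ Λ,
      ENNReal.ofReal (1 - α) ≤ D[|{p : X × Y | lam ≤ C p.1}] agree
  · have huniv : {ω : Fin m → X × Y |
        ∀ lamhat : ℝ,
          IsLeast {lam | lam ∈ Λ ∧
              ∀ lam' ∈ Λ, lam ≤ lam' → RhatPlus f C δ m ω lam' ≤ α} lamhat →
          ENNReal.ofReal (1 - α) ≤
            D[|{p : X × Y | lamhat ≤ C p.1}] agree} = Set.univ := by
      apply Set.eq_univ_of_forall
      intro ω lamhat hL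
      exact hall lamhat hL.1.1
    rw [huniv, measure_univ]
    exact ENNReal.ofReal_le_one.2 (by linarith)
  · push_neg at hall
    obtain ⟨lam0, hlam0Λ, hlam0bad⟩ := hall
    set Bs : Finset ℝ := Λ.filter (fun lam =>
      ¬ (ENNReal.ofReal (1 - α) ≤ D[|{p : X × Y | lam ≤ C p.1}] agree)) with hBs
    have hBsne : Bs.Nonempty := ⟨lam0, Finset.mem_filter.2 ⟨hlam0Λ, not_le.2 hlam0bad⟩⟩
    set lamS : ℝ := Bs.max' hBsne with hlamS
    have hlamSmem : lamS ∈ Λ := (Finset.mem_filter.1 (Bs.max'_mem hBsne)).1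
    have hlamSbad : ¬ (ENNReal.ofReal (1 - α) ≤ D[|{p : X × Y | lamS ≤ C p.1}] agree) :=
      (Finset.mem_filter.1 (Bs.max'_mem hBsne)).2
    have hmaxS : ∀ lam ∈ Λ,
        ¬ (ENNReal.ofReal (1 - α) ≤ D[|{p : X × Y | lam ≤ C p.1}] agree) → lam ≤ lamS :=
      fun lam h1 h2 => Bs.le_max' lam (Finset.mem_filter.2 ⟨h1, h2⟩)
    set S : Set (X × Y) := {p : X × Y | lamS ≤ C p.1} with hSdef
    have hSm : MeasurableSet S := measurableSet_le measurable_const (hC.comp measurable_fst)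
    have hq0' : D S ≠ 0 := (hpos lamS hlamSmem).ne'
    have hqtop : D S ≠ ⊤ := measure_ne_top D S
    set q : ℝ := (D S).toReal with hqdef
    have hq0 : 0 < q := ENNReal.toReal_pos hq0' hqtop
    set b : ℝ := (D (agree ∩ S)).toReal with hbdef
    have hbq : b ≤ q := ENNReal.toReal_mono hqtop (measure_mono Set.inter_subset_right)
    have hb0 : 0 ≤ b := ENNReal.toReal_nonneg
    set p : ℝ := 1 - b / q with hpdef
    have hp0 : 0 ≤ p := by
      have : b / q ≤ 1 := (div_le_one hq0).2 hbq
      rw [hpdef]; linarith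
    have hp1 : p ≤ 1 := by
      have : 0 ≤ b / q := div_nonneg hb0 hq0.le
      rw [hpdef]; linarith
    set B1 : Set (X × Y) := toMeasurable D (agree ∩ S) ∩ S with hB1def
    have hB1m : MeasurableSet B1 := (measurableSet_toMeasurable _ _).inter hSm
    have hB1sub : agree ∩ S ⊆ B1 :=
      Set.subset_inter (subset_toMeasurable D _) Set.inter_subset_right
    have hB1S : B1 ⊆ S := Set.inter_subset_right
    have hB1meas : D B1 = D (agree ∩ S) :=
      le_antisymm (le_trans (measure_mono Set.inter_subset_left)
        (measure_toMeasurable _).le) (measure_mono hB1sub)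
    set A0 : Set (X × Y) := S \ B1 with hA0def
    have hA0m : MeasurableSet A0 := hSm.diff hB1m
    have hAB : A0 ∪ B1 = S := Set.diff_union_of_subset hB1S
    have hDA0 : D A0 = D S - D B1 :=
      measure_diff hB1S hB1m.nullMeasurableSet (measure_ne_top _ _)
    have hbB1 : (D B1).toReal = (1 - p) * q := by
      rw [hB1meas, ← hbdef, hpdef]
      field_simp
      ring
    have haA0 : (D A0).toReal = p * q := by
      rw [hDA0, ENNReal.toReal_sub_of_le (measure_mono hB1S) hqtop, hbB1, ← hqdef, hpdef]
      ring
    set G : Set (Fin m → X × Y) := {ω | δ ≤ binCDF (nSel C m ω lamS) p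
      ⌈(nSel C m ω lamS : ℝ) * Rhat f C m ω lamS⌉₊} with hGdef
    have hGc : Gᶜ ⊆ {ω : Fin m → X × Y |
        binCDF (Set.ncard {i | ω i ∈ A0 ∪ B1}) p (Set.ncard {i | ω i ∈ A0}) < δ} := by
      intro ω hω
      simp only [hGdef, Set.mem_compl_iff, Set.mem_setOf_eq, not_le] at hω
      have hsetN : {i : Fin m | ω i ∈ A0 ∪ B1} = {i : Fin m | lamS ≤ C (ω i).1} := by
        rw [hAB]; rfl
      have hN : Set.ncard {i : Fin m | ω i ∈ A0 ∪ B1} = nSel C m ω lamS := by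
        rw [hsetN]; rfl
      rw [Set.mem_setOf_eq, hN]
      rcases Nat.eq_zero_or_pos (nSel C m ω lamS) with hN0 | hNpos
      · exfalso
        have hr : Rhat f C m ω lamS = 0 := by
          rw [Rhat, hN0]; simp
        rw [hN0, hr] at hω
        simp only [Nat.cast_zero, mul_zero, Nat.ceil_zero] at hω
        have : binCDF 0 p 0 = 1 := by simp [binCDF]
        rw [this] at hω
        linarith
      · have hceil : ⌈(nSel C m ω lamS : ℝ) * Rhat f C m ω lamS⌉₊ =
            Set.ncard {i : Fin m | lamS ≤ C (ω i).1 ∧ f (ω i).1 ≠ (ω i).2} := by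
          rw [Rhat]
          have hNne : ((nSel C m ω lamS : ℝ)) ≠ 0 := Nat.cast_ne_zero.2 hNpos.ne'
          rw [mul_comm, div_mul_cancel₀ _ hNne, Nat.ceil_natCast]
        have hKt : Set.ncard {i : Fin m | ω i ∈ A0} ≤
            Set.ncard {i : Fin m | lamS ≤ C (ω i).1 ∧ f (ω i).1 ≠ (ω i).2} := by
          apply Set.ncard_le_ncard ?_ (Set.toFinite _)
          intro i hi
          have hiA : ω i ∈ A0 := hi
          have hiS : ω i ∈ S := hiA.1
          have hnB : ω i ∉ B1 := hiA.2
          refine ⟨hiS, fun hfe => hnB (hB1sub ⟨hfe, hiS⟩)⟩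
        rw [hceil] at hω
        exact lt_of_le_of_lt (binCDF_mono hp0 hp1 hKt) hω
    have hGcle : Dm Gᶜ ≤ ENNReal.ofReal δ := by
      refine le_trans (measure_mono hGc) ?_
      exact count_bound D A0 B1 hA0m hB1m m p δ hp0 hp1 hδ0.le
        (by rw [hAB]; exact haA0) (by rw [hAB]; exact hbB1)
    have hGge : ENNReal.ofReal (1 - δ) ≤ Dm G := by
      have h1 : (1 : ℝ≥0∞) ≤ Dm G + Dm Gᶜ := by
        calc (1 : ℝ≥0∞) = Dm Set.univ := (measure_univ (μ := Dm)).symm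
          _ = Dm (G ∪ Gᶜ) := by rw [Set.union_compl_self]
          _ ≤ Dm G + Dm Gᶜ := measure_union_le _ _
      have h2 : (1 : ℝ≥0∞) ≤ Dm G + ENNReal.ofReal δ :=
        h1.trans (add_le_add le_rfl hGcle)
      have h3 : ENNReal.ofReal (1 - δ) + ENNReal.ofReal δ = 1 := by
        rw [← ENNReal.ofReal_add (by linarith) hδ0.le]
        norm_num
      calc ENNReal.ofReal (1 - δ) = 1 - ENNReal.ofReal δ := by
            rw [← h3, ENNReal.add_sub_cancel_right ENNReal.ofReal_ne_top]
        _ ≤ Dm G := tsub_le_iff_right.2 h2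
    refine le_trans hGge (measure_mono ?_)
    intro ω hω lamhat hL
    obtain ⟨⟨hlamhatΛ, htests⟩, -⟩ := hL
    have hnot : ¬ lamhat ≤ lamS := by
      intro hle
      have htest := htests lamS hlamSmem hle
      have hple : p ≤ RhatPlus f C δ m ω lamS := by
        apply le_csSup ⟨1, fun x hx => hx.1.2⟩
        exact ⟨⟨hp0, hp1⟩, hω⟩
      have hpα : p ≤ α := hple.trans htest
      apply hlamSbad
      have hcond : D[|S] agree = (D S)⁻¹ * D (agree ∩ S) := by
        rw [ProbabilityTheory.cond, Measure.smul_apply, Measure.restrict_apply' hSm,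
          smul_eq_mul]
      rw [hcond,
        show D S = ENNReal.ofReal q from (ENNReal.ofReal_toReal hqtop).symm,
        show D (agree ∩ S) = ENNReal.ofReal b from
          (ENNReal.ofReal_toReal (measure_ne_top _ _)).symm,
        ← ENNReal.div_eq_inv_mul, ← ENNReal.ofReal_div_of_pos hq0]
      apply ENNReal.ofReal_le_ofReal
      rw [le_div_iff₀ hq0]
      have hbqα : 1 - α ≤ b / q := by rw [hpdef] at hpα; linarith
      calc (1 - α) * q ≤ (b / q) * q := mul_le_mul_of_nonneg_right hbqα hq0.le
        _ = b := by field_simp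
    push_neg at hnot
    by_contra hbadhat
    exact absurd (hmaxS lamhat hlamhatΛ hbadhat) (not_le.2 hnot)
end

section
/- Let q and p be probability measures on a measurable space Ω with q absolutely continuous with respect to p and KL(q‖p) < ∞. Let S ⊆ Ω be measurable with z := q(S) satisfying 1/2 ≤ z < 1, and define the conditional measure q̃(A) = q(A ∩ S)/z. Then KL(q̃‖p) ≤ 2 ( KL(q‖p) + 1 ). -/
open MeasureTheory ProbabilityTheory
open scoped ENNReal NNReal

/- Kullback–Leibler divergence (natural log), `∞` when `q` is not absolutely
continuous w.r.t. `p` or when the log-density is not integrable. -/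
open Classical in
noncomputable def KL {Ω : Type*} [MeasurableSpace Ω] (q p : Measure Ω) : ℝ≥0∞ :=
  if q ≪ p ∧ Integrable (fun ω => Real.log (q.rnDeriv p ω).toReal) q then
    ENNReal.ofReal (∫ ω, Real.log (q.rnDeriv p ω).toReal ∂q)
  else ⊤

section Aux

open Real

/-- Gibbs' inequality: nonnegativity of the KL integral. -/
lemma my_gibbs {Ω : Type*} [MeasurableSpace Ω] (μ ν : Measure Ω)
    [IsProbabilityMeasure μ] [IsProbabilityMeasure ν]
    (h : μ ≪ ν) (hi : Integrable (llr μ ν) μ) :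
    0 ≤ ∫ x, llr μ ν x ∂μ := by
  set f := μ.rnDeriv ν with hf
  have hmeas : Measurable f := Measure.measurable_rnDeriv μ ν
  have hpos : ∀ᵐ x ∂μ, 0 < f x := Measure.rnDeriv_pos h
  have hlt : ∀ᵐ x ∂μ, f x < ∞ := h.ae_le (Measure.rnDeriv_lt_top μ ν)
  have hlint : ∫⁻ x, (f x)⁻¹ ∂μ ≤ 1 := by
    conv_lhs => rw [← Measure.withDensity_rnDeriv_eq μ ν h]
    rw [lintegral_withDensity_eq_lintegral_mul _ (Measure.measurable_rnDeriv μ ν)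
      (show Measurable fun x => (f x)⁻¹ from hmeas.inv)]
    calc ∫⁻ x, (f * fun x => (f x)⁻¹) x ∂ν ≤ ∫⁻ _, 1 ∂ν := by
          refine lintegral_mono fun x => ?_
          simp only [Pi.mul_apply]
          exact ENNReal.mul_inv_le_one _
      _ = 1 := by simp
  have hptle : ∀ x, ENNReal.ofReal (((f x).toReal)⁻¹) ≤ (f x)⁻¹ := by
    intro x
    rw [← ENNReal.toReal_inv]
    exact ENNReal.ofReal_toReal_le
  have hlint2 : ∫⁻ x, ENNReal.ofReal (((f x).toReal)⁻¹) ∂μ ≤ 1 :=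
    le_trans (lintegral_mono hptle) hlint
  have hint_inv : Integrable (fun x => ((f x).toReal)⁻¹) μ := by
    refine ⟨(hmeas.ennreal_toReal.inv).aestronglyMeasurable, ?_⟩
    rw [hasFiniteIntegral_iff_norm]
    calc ∫⁻ x, ENNReal.ofReal ‖((f x).toReal)⁻¹‖ ∂μ
        = ∫⁻ x, ENNReal.ofReal (((f x).toReal)⁻¹) ∂μ := by
          refine lintegral_congr fun x => ?_
          rw [Real.norm_of_nonneg (by positivity)]
      _ ≤ 1 := hlint2
      _ < ∞ := ENNReal.one_lt_top
  have hmono : ∫ x, -llr μ ν x ∂μ ≤ ∫ x, (((f x).toReal)⁻¹ - 1) ∂μ := by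
    refine integral_mono_ae hi.neg (hint_inv.sub (integrable_const 1)) ?_
    filter_upwards [hpos, hlt] with x hx hx'
    have hg : 0 < (f x).toReal := ENNReal.toReal_pos hx.ne' hx'.ne
    have h2 := Real.log_le_sub_one_of_pos (inv_pos.2 hg)
    rw [Real.log_inv] at h2
    simp only [llr, hf]
    linarith
  have hle : ∫ x, ((f x).toReal)⁻¹ ∂μ ≤ 1 := by
    rw [integral_eq_lintegral_of_nonneg_ae
      (ae_of_all _ fun x => (by positivity : (0:ℝ) ≤ ((f x).toReal)⁻¹))
      (show AEStronglyMeasurable (fun x => ((f x).toReal)⁻¹) μ from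
        (hmeas.ennreal_toReal.inv).aestronglyMeasurable)]
    calc (∫⁻ x, ENNReal.ofReal (((f x).toReal)⁻¹) ∂μ).toReal
        ≤ (1 : ℝ≥0∞).toReal := ENNReal.toReal_mono ENNReal.one_ne_top hlint2
      _ = 1 := by simp
  have hfin : ∫ x, (((f x).toReal)⁻¹ - 1) ∂μ ≤ 0 := by
    rw [integral_sub hint_inv (integrable_const 1), integral_const, probReal_univ]
    simp only [ENNReal.toReal_one, smul_eq_mul, one_mul]
    linarith
  rw [integral_neg] at hmono
  linarith

/-- llr of a conditional measure. -/
lemma my_cond_llr {Ω : Type*} [MeasurableSpace Ω] (q p : Measure Ω)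
    [IsProbabilityMeasure q] [IsProbabilityMeasure p]
    (habs : q ≪ p) (hint : Integrable (llr q p) q)
    (T : Set Ω) (hT : MeasurableSet T) (hT0 : q T ≠ 0) :
    (q[|T]) ≪ p ∧ Integrable (llr (q[|T]) p) (q[|T]) ∧
    ∫ x, llr (q[|T]) p x ∂(q[|T])
      = -Real.log (q T).toReal + ((q T).toReal)⁻¹ * ∫ x in T, llr q p x ∂q := by
  haveI : IsProbabilityMeasure (q[|T]) := cond_isProbabilityMeasure hT0
  have hTtop : q T ≠ ∞ := measure_ne_top q T
  have hTinv_ne_top : (q T)⁻¹ ≠ ∞ := ENNReal.inv_ne_top.2 hT0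
  have hcondq : (q[|T]) ≪ q := cond_absolutelyContinuous
  have hac : (q[|T]) ≪ p := hcondq.trans habs
  have hcond_def : q[|T] = (q T)⁻¹ • q.restrict T := rfl
  have h1 : (q.restrict T).rnDeriv p =ᵐ[p] T.indicator (q.rnDeriv p) :=
    Measure.rnDeriv_restrict q p hT
  have h2 : ((q T)⁻¹ • q.restrict T).rnDeriv p
      =ᵐ[p] (q T)⁻¹ • (q.restrict T).rnDeriv p :=
    Measure.rnDeriv_smul_left_of_ne_top _ p hTinv_ne_top
  have h3 : (q[|T]).rnDeriv p =ᵐ[p] fun x => (q T)⁻¹ * T.indicator (q.rnDeriv p) x := by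
    rw [hcond_def]
    filter_upwards [h1, h2] with x hx1 hx2
    simp [hx2, hx1]
  have h3' : ∀ᵐ x ∂(q[|T]), (q[|T]).rnDeriv p x = (q T)⁻¹ * T.indicator (q.rnDeriv p) x :=
    hac.ae_le h3
  have hmem : ∀ᵐ x ∂(q[|T]), x ∈ T := by
    rw [ae_iff]
    have : (q[|T]) Tᶜ = 0 := by
      rw [cond_apply hT]
      simp
    exact this
  have hpos : ∀ᵐ x ∂(q[|T]), 0 < q.rnDeriv p x := hcondq.ae_le (Measure.rnDeriv_pos habs)
  have hlt : ∀ᵐ x ∂(q[|T]), q.rnDeriv p x < ∞ := hac.ae_le (Measure.rnDeriv_lt_top q p)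
  have hTr_pos : 0 < (q T).toReal := ENNReal.toReal_pos hT0 hTtop
  have hkey : ∀ᵐ x ∂(q[|T]), llr (q[|T]) p x = -Real.log (q T).toReal + llr q p x := by
    filter_upwards [h3', hmem, hpos, hlt] with x hx hxT hxpos hxlt
    have hind : T.indicator (q.rnDeriv p) x = q.rnDeriv p x := Set.indicator_of_mem hxT _
    have hrd_pos : 0 < (q.rnDeriv p x).toReal := ENNReal.toReal_pos hxpos.ne' hxlt.ne
    rw [llr, hx, hind, ENNReal.toReal_mul, ENNReal.toReal_inv,
      Real.log_mul (by positivity) (by positivity), Real.log_inv]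
    rfl
  have hint' : Integrable (llr q p) (q[|T]) := by
    rw [hcond_def]
    exact (hint.restrict (s := T)).smul_measure hTinv_ne_top
  have hint2 : Integrable (llr (q[|T]) p) (q[|T]) :=
    (((integrable_const (-Real.log (q T).toReal)).add hint').congr
      (Filter.EventuallyEq.symm hkey))
  refine ⟨hac, hint2, ?_⟩
  rw [integral_congr_ae hkey, integral_add (integrable_const _) hint',
    integral_const, probReal_univ]
  congr 1
  · simp
  · rw [hcond_def, integral_smul_measure, ENNReal.toReal_inv]
    rfl

lemma KL_eq_of {Ω : Type*} [MeasurableSpace Ω] {q p : Measure Ω}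
    (h1 : q ≪ p) (h2 : Integrable (llr q p) q) :
    KL q p = ENNReal.ofReal (∫ x, llr q p x ∂q) := by
  rw [KL, if_pos ⟨h1, h2⟩]
  rfl

lemma KL_integrable_of_ne_top {Ω : Type*} [MeasurableSpace Ω] {q p : Measure Ω}
    (hfin : KL q p ≠ ⊤) : Integrable (llr q p) q := by
  by_contra hc
  exact hfin (by rw [KL, if_neg (fun h => hc h.2)])

end Aux

/-- b4-step bound: if `z = q(S) ∈ [1/2, 1)` then the conditional measure
`q̃ = q[|S]` satisfies `KL(q̃‖p) ≤ 2(KL(q‖p) + 1)`. -/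
theorem stmt9 {Ω : Type*} [MeasurableSpace Ω] (q p : Measure Ω)
    [IsProbabilityMeasure q] [IsProbabilityMeasure p]
    (habs : q ≪ p) (hfin : KL q p ≠ ⊤)
    (S : Set Ω) (hS : MeasurableSet S)
    (hz0 : 1 / 2 ≤ q S) (hz1 : q S < 1) :
    KL (q[|S]) p ≤ 2 * (KL q p + 1) := by
  have hint : Integrable (llr q p) q := KL_integrable_of_ne_top hfin
  set z := q S with hz
  have hz_ne0 : z ≠ 0 := by
    intro h
    rw [h] at hz0
    simp at hz0
  have hz_ne_top : z ≠ ∞ := measure_ne_top q S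
  have hsum : q S + q Sᶜ = 1 := by
    rw [measure_add_measure_compl hS, measure_univ]
  have hw_ne0 : q Sᶜ ≠ 0 := by
    intro h
    rw [h, add_zero] at hsum
    rw [hz, hsum] at hz1
    exact absurd hz1 (lt_irrefl _)
  -- real quantities
  set zr := z.toReal with hzr
  set wr := (q Sᶜ).toReal with hwr
  have hzw : zr + wr = 1 := by
    have h2 := congrArg ENNReal.toReal hsum
    rwa [ENNReal.toReal_add hz_ne_top (measure_ne_top q Sᶜ), ENNReal.toReal_one] at h2
  have hzr_half : (1:ℝ)/2 ≤ zr := by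
    have := ENNReal.toReal_mono hz_ne_top hz0
    simpa using this
  have hzr_lt1 : zr < 1 := by
    have := (ENNReal.toReal_lt_toReal hz_ne_top ENNReal.one_ne_top).mpr hz1
    simpa using this
  have hzr_pos : 0 < zr := by linarith
  have hwr_pos : 0 < wr := by linarith
  have hwr_half : wr ≤ 1/2 := by linarith
  -- apply the conditional llr lemma to S and Sᶜ
  obtain ⟨hacS, hintS, hS_eq⟩ := my_cond_llr q p habs hint S hS hz_ne0
  obtain ⟨hacSc, hintSc, hSc_eq⟩ := my_cond_llr q p habs hint Sᶜ hS.compl hw_ne0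
  haveI : IsProbabilityMeasure (q[|S]) := cond_isProbabilityMeasure hz_ne0
  haveI : IsProbabilityMeasure (q[|Sᶜ]) := cond_isProbabilityMeasure hw_ne0
  set L := ∫ x, llr q p x ∂q with hL
  set A := ∫ x in S, llr q p x ∂q with hA
  set B := ∫ x in Sᶜ, llr q p x ∂q with hB
  have hAB : A + B = L := integral_add_compl hS hint
  have hL_nonneg : 0 ≤ L := my_gibbs q p habs hint
  have hGc : 0 ≤ -Real.log wr + wr⁻¹ * B := by
    rw [← hSc_eq]
    exact my_gibbs _ p hacSc hintSc
  -- B ≥ wr * log wr ≥ -1/e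
  have hB_low : wr * Real.log wr ≤ B := by
    have h1 : Real.log wr ≤ wr⁻¹ * B := by linarith
    calc wr * Real.log wr ≤ wr * (wr⁻¹ * B) := by
          exact mul_le_mul_of_nonneg_left h1 (le_of_lt hwr_pos)
      _ = B := by field_simp
  have hexp_pos : (0:ℝ) < Real.exp 1 := Real.exp_pos 1
  have hlog_le : ∀ y : ℝ, 0 < y → Real.log y ≤ y / Real.exp 1 := by
    intro y hy
    have h1 : Real.log (y / Real.exp 1) ≤ y / Real.exp 1 - 1 :=
      Real.log_le_sub_one_of_pos (by positivity)
    rw [Real.log_div hy.ne' hexp_pos.ne', Real.log_exp] at h1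
    linarith
  have hxlogx : -(1 / Real.exp 1) ≤ wr * Real.log wr := by
    have h1 : Real.log wr⁻¹ ≤ wr⁻¹ / Real.exp 1 := hlog_le _ (by positivity)
    rw [Real.log_inv] at h1
    have h2 : wr * (wr⁻¹ / Real.exp 1) = 1 / Real.exp 1 := by field_simp
    nlinarith [mul_le_mul_of_nonneg_left h1 (le_of_lt hwr_pos)]
  have hA_up : A ≤ L + 1 / Real.exp 1 := by nlinarith
  -- the target real quantity
  set T := -Real.log zr + zr⁻¹ * A with hT
  have hzr_inv_le : zr⁻¹ ≤ 2 := by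
    rw [inv_le_comm₀ hzr_pos (by norm_num)]
    linarith
  have hlogzr : -Real.log zr ≤ Real.log 2 := by
    have h1 : Real.log (1/2) ≤ Real.log zr :=
      Real.log_le_log (by norm_num) hzr_half
    rw [one_div, Real.log_inv] at h1
    linarith
  have hTA : zr⁻¹ * A ≤ 2 * (L + 1 / Real.exp 1) := by
    have hLA : 0 ≤ L + 1 / Real.exp 1 := by positivity
    calc zr⁻¹ * A ≤ zr⁻¹ * (L + 1 / Real.exp 1) :=
          mul_le_mul_of_nonneg_left hA_up (by positivity)
      _ ≤ 2 * (L + 1 / Real.exp 1) := mul_le_mul_of_nonneg_right hzr_inv_le hLA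
  have hnum : Real.log 2 + 2 * (1 / Real.exp 1) ≤ 2 := by
    have h1 : Real.log 2 < 0.6931471808 := Real.log_two_lt_d9
    have h2 : (2.7182818283 : ℝ) < Real.exp 1 := Real.exp_one_gt_d9
    have h3 : 1 / Real.exp 1 < 1 / 2.7182818283 :=
      one_div_lt_one_div_of_lt (by norm_num) h2
    nlinarith
  have hT_le : T ≤ 2 * L + 2 := by
    rw [hT]
    linarith
  -- conclude in ℝ≥0∞
  rw [KL_eq_of hacS hintS, KL_eq_of habs hint, hS_eq]
  calc ENNReal.ofReal (-Real.log zr + zr⁻¹ * A)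
      ≤ ENNReal.ofReal (2 * L + 2) := ENNReal.ofReal_le_ofReal hT_le
    _ = 2 * ENNReal.ofReal L + 2 := by
        rw [ENNReal.ofReal_add (by positivity) (by norm_num),
          ENNReal.ofReal_mul (by norm_num)]
        norm_num
    _ = 2 * (ENNReal.ofReal L + 1) := by ring
end

section
/- Let n ≥ 1 and let f_W be an n-layer ReLU network with weight matrices W_1, …, W_n, each with nonzero spectral norm. Let U_1, …, U_n be perturbation matrices of matching dimensions satisfying ‖U_l‖₂ ≤ (1/n)‖W_l‖₂ for every l. Then for every input x, ‖ f_{W+U}(x) − f_W(x) ‖₂ ≤ e · ‖x‖₂ · ( ∏_{l=1}^n ‖W_l‖₂ ) · Σ_{l=1}^n ‖U_l‖₂ / ‖W_l‖₂, where f_{W+U} denotes the network with weight matrices W_1 + U_1, …, W_n + U_n. -/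
open scoped ENNReal NNReal

/-- Euclidean norm of a vector. -/
noncomputable def vnorm {k : ℕ} (v : Fin k → ℝ) : ℝ := Real.sqrt (∑ i, v i ^ 2)

/-- Spectral norm (largest singular value) of a real matrix. -/
noncomputable def specNorm {a b : ℕ} (W : Matrix (Fin a) (Fin b) ℝ) : ℝ :=
  sSup ((fun x => vnorm (W.mulVec x)) '' {x | vnorm x ≤ 1})

/-- `net dims W n x = W_n φ(W_{n-1} φ(⋯ φ(W_1 x)⋯))` : an `n`-layer ReLU network
(weights `W l : dims (l+1) × dims l`, no activation after the last layer,
none before the first). -/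
noncomputable def net (dims : ℕ → ℕ)
    (W : ∀ l, Matrix (Fin (dims (l + 1))) (Fin (dims l)) ℝ) :
    ∀ n, (Fin (dims 0) → ℝ) → (Fin (dims n) → ℝ)
  | 0 => fun x => x
  | 1 => fun x => (W 0).mulVec x
  | (n + 2) => fun x => (W (n + 1)).mulVec (fun i => max (net dims W (n + 1) x i) 0)

lemma vnorm_eq_norm {k : ℕ} (v : Fin k → ℝ) :
    vnorm v = ‖(WithLp.equiv 2 (Fin k → ℝ)).symm v‖ := by
  rw [EuclideanSpace.norm_eq]
  simp [vnorm, sq_abs]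

noncomputable def mvCLM {a b : ℕ} (W : Matrix (Fin a) (Fin b) ℝ) :
    EuclideanSpace ℝ (Fin b) →L[ℝ] EuclideanSpace ℝ (Fin a) :=
  LinearMap.toContinuousLinearMap
    { toFun := fun x => (WithLp.equiv 2 _).symm (W.mulVec (WithLp.equiv 2 _ x)),
      map_add' := by intro x y; ext i; simp [Matrix.mulVec_add],
      map_smul' := by intro c x; ext i; simp [Matrix.mulVec_smul] }

lemma mvCLM_apply {a b : ℕ} (W : Matrix (Fin a) (Fin b) ℝ) (x : Fin b → ℝ) :
    mvCLM W ((WithLp.equiv 2 _).symm x) = (WithLp.equiv 2 _).symm (W.mulVec x) := rfl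

lemma specNorm_eq_opNorm {a b : ℕ} (W : Matrix (Fin a) (Fin b) ℝ) :
    specNorm W = ‖mvCLM W‖ := by
  rw [← ContinuousLinearMap.sSup_unitClosedBall_eq_norm (mvCLM W), specNorm]
  congr 1
  ext r
  constructor
  · rintro ⟨x, hx, rfl⟩
    exact ⟨(WithLp.equiv 2 _).symm x,
      mem_closedBall_zero_iff.mpr ((vnorm_eq_norm x) ▸ hx),
      (vnorm_eq_norm (W.mulVec x)).symm⟩
  · rintro ⟨x, hx, rfl⟩
    exact ⟨WithLp.equiv 2 _ x,
      (vnorm_eq_norm (WithLp.equiv 2 _ x)).trans_le (mem_closedBall_zero_iff.mp hx),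
      vnorm_eq_norm _⟩

lemma vnorm_nonneg {k : ℕ} (v : Fin k → ℝ) : 0 ≤ vnorm v := Real.sqrt_nonneg _

lemma specNorm_nonneg {a b : ℕ} (W : Matrix (Fin a) (Fin b) ℝ) : 0 ≤ specNorm W := by
  rw [specNorm_eq_opNorm]; exact norm_nonneg _

lemma vnorm_mulVec_le {a b : ℕ} (W : Matrix (Fin a) (Fin b) ℝ) (x : Fin b → ℝ) :
    vnorm (W.mulVec x) ≤ specNorm W * vnorm x := by
  rw [specNorm_eq_opNorm, vnorm_eq_norm x, vnorm_eq_norm]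
  exact (mvCLM W).le_opNorm ((WithLp.equiv 2 _).symm x)

lemma mvCLM_add {a b : ℕ} (W U : Matrix (Fin a) (Fin b) ℝ) :
    mvCLM (W + U) = mvCLM W + mvCLM U := by
  ext x i
  simp [mvCLM, Matrix.add_mulVec, LinearMap.toContinuousLinearMap]

lemma specNorm_add_le {a b : ℕ} (W U : Matrix (Fin a) (Fin b) ℝ) :
    specNorm (W + U) ≤ specNorm W + specNorm U := by
  rw [specNorm_eq_opNorm, specNorm_eq_opNorm, specNorm_eq_opNorm, mvCLM_add]
  exact norm_add_le _ _

lemma vnorm_add_le {k : ℕ} (u v : Fin k → ℝ) : vnorm (u + v) ≤ vnorm u + vnorm v := by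
  rw [vnorm_eq_norm, vnorm_eq_norm, vnorm_eq_norm]
  exact norm_add_le ((WithLp.equiv 2 _).symm u) ((WithLp.equiv 2 _).symm v)

lemma vnorm_relu_sub {k : ℕ} (v w : Fin k → ℝ) :
    vnorm ((fun i => max (v i) 0) - fun i => max (w i) 0) ≤ vnorm (v - w) := by
  unfold vnorm
  apply Real.sqrt_le_sqrt
  apply Finset.sum_le_sum
  intro i _
  have h := abs_max_sub_max_le_abs (v i) (w i) 0
  calc ((fun i => max (v i) 0) - fun i => max (w i) 0) i ^ 2
      = |max (v i) 0 - max (w i) 0| ^ 2 := by rw [sq_abs]; rfl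
    _ ≤ |v i - w i| ^ 2 := pow_le_pow_left₀ (abs_nonneg _) h 2
    _ = (v - w) i ^ 2 := by rw [sq_abs]; rfl

lemma vnorm_relu_le {k : ℕ} (v : Fin k → ℝ) :
    vnorm (fun i => max (v i) 0) ≤ vnorm v := by
  unfold vnorm
  apply Real.sqrt_le_sqrt
  apply Finset.sum_le_sum
  intro i _
  have h : |max (v i) 0| ≤ |v i| := by
    simpa using abs_max_sub_max_le_abs (v i) 0 0
  calc max (v i) 0 ^ 2 = |max (v i) 0| ^ 2 := (sq_abs _).symm
    _ ≤ |v i| ^ 2 := pow_le_pow_left₀ (abs_nonneg _) h 2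
    _ = v i ^ 2 := sq_abs _

lemma net_growth (dims : ℕ → ℕ) (V : ∀ l, Matrix (Fin (dims (l + 1))) (Fin (dims l)) ℝ) :
    ∀ k (x : Fin (dims 0) → ℝ),
      vnorm (net dims V k x) ≤ vnorm x * ∏ l ∈ Finset.range k, specNorm (V l)
  | 0, x => by simp [net]
  | 1, x => by
      simpa [net, mul_comm] using vnorm_mulVec_le (V 0) x
  | (k + 2), x => by
      have ih := net_growth dims V (k + 1) x
      calc vnorm (net dims V (k + 2) x)
          ≤ specNorm (V (k + 1)) * vnorm (fun i => max (net dims V (k + 1) x i) 0) :=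
            vnorm_mulVec_le _ _
        _ ≤ specNorm (V (k + 1)) * vnorm (net dims V (k + 1) x) := by
            exact mul_le_mul_of_nonneg_left (vnorm_relu_le _) (specNorm_nonneg _)
        _ ≤ specNorm (V (k + 1)) * (vnorm x * ∏ l ∈ Finset.range (k + 1), specNorm (V l)) :=
            mul_le_mul_of_nonneg_left ih (specNorm_nonneg _)
        _ = vnorm x * ∏ l ∈ Finset.range (k + 2), specNorm (V l) := by
            rw [Finset.prod_range_succ (fun l => specNorm (V l)) (k+1)]; ring

lemma net_succ_eq (dims : ℕ → ℕ) (V : ∀ l, Matrix (Fin (dims (l + 1))) (Fin (dims l)) ℝ)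
    (k : ℕ) (hk : 1 ≤ k) (x : Fin (dims 0) → ℝ) :
    net dims V (k + 1) x = (V k).mulVec (fun i => max (net dims V k x i) 0) := by
  cases k with
  | zero => omega
  | succ m => rfl

/-- Lemma D.1 (perturbation bound of Neyshabur et al.): if each perturbation
satisfies `‖U_l‖₂ ≤ (1/n)‖W_l‖₂`, then for every input `x`,
`‖f_{W+U}(x) − f_W(x)‖₂ ≤ e ‖x‖₂ (∏ ‖W_l‖₂) ∑ ‖U_l‖₂/‖W_l‖₂`. -/
theorem stmt10 (n : ℕ) (hn : 1 ≤ n) (dims : ℕ → ℕ)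
    (W U : ∀ l, Matrix (Fin (dims (l + 1))) (Fin (dims l)) ℝ)
    (hW : ∀ l, l < n → specNorm (W l) ≠ 0)
    (hU : ∀ l, l < n → specNorm (U l) ≤ (1 / n : ℝ) * specNorm (W l)) :
    ∀ x : Fin (dims 0) → ℝ,
      vnorm (net dims (fun l => W l + U l) n x - net dims W n x) ≤
        Real.exp 1 * vnorm x * (∏ l ∈ Finset.range n, specNorm (W l)) *
          ∑ l ∈ Finset.range n, specNorm (U l) / specNorm (W l) := by
  intro x
  have hn0 : (0:ℝ) < n := by exact_mod_cast Nat.pos_of_ne_zero (by omega)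
  obtain ⟨t, ht_def⟩ : ∃ t : ℝ, t = 1 + 1 / n := ⟨_, rfl⟩
  have ht1 : (1:ℝ) ≤ t := by
    have : (0:ℝ) ≤ 1 / (n:ℝ) := by positivity
    rw [ht_def]; linarith
  have ht0 : (0:ℝ) ≤ t := by linarith
  have key : ∀ k, 1 ≤ k → k ≤ n →
      vnorm (net dims (fun l => W l + U l) k x - net dims W k x) ≤
        vnorm x * t ^ k * (∏ l ∈ Finset.range k, specNorm (W l)) *
          ∑ l ∈ Finset.range k, specNorm (U l) / specNorm (W l) := by
    intro k hk1
    induction k, hk1 using Nat.le_induction with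
    | base =>
      intro _
      have h0 : specNorm (W 0) ≠ 0 := hW 0 (by omega)
      have hdiff : net dims (fun l => W l + U l) 1 x - net dims W 1 x = (U 0).mulVec x := by
        show (W 0 + U 0).mulVec x - (W 0).mulVec x = _
        rw [Matrix.add_mulVec]; abel
      rw [hdiff]
      simp only [Finset.prod_range_one, Finset.sum_range_one, pow_one]
      calc vnorm ((U 0).mulVec x) ≤ specNorm (U 0) * vnorm x := vnorm_mulVec_le _ _
        _ ≤ t * specNorm (U 0) * vnorm x := by
            nlinarith [mul_nonneg (mul_nonneg (sub_nonneg.mpr ht1) (specNorm_nonneg (U 0))) (vnorm_nonneg x)]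
        _ = vnorm x * t * specNorm (W 0) * (specNorm (U 0) / specNorm (W 0)) := by
            field_simp
    | succ k hk ih =>
      intro hkn
      have hkn' : k ≤ n := by omega
      have ihk := ih hkn'
      have hWk : (0:ℝ) < specNorm (W k) :=
        lt_of_le_of_ne (specNorm_nonneg _) (Ne.symm (hW k (by omega)))
      set A := net dims (fun l => W l + U l) k x with hA_def
      set B := net dims W k x with hB_def
      have hsplit : net dims (fun l => W l + U l) (k + 1) x - net dims W (k + 1) x =
          (W k).mulVec ((fun i => max (A i) 0) - fun i => max (B i) 0) +
            (U k).mulVec (fun i => max (A i) 0) := by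
        rw [net_succ_eq dims (fun l => W l + U l) k hk x, net_succ_eq dims W k hk x,
          Matrix.mulVec_sub]
        show (W k + U k).mulVec _ - _ = _
        rw [Matrix.add_mulVec]; abel
      have hprod : ∏ l ∈ Finset.range k, specNorm (W l + U l) ≤
          t ^ k * ∏ l ∈ Finset.range k, specNorm (W l) := by
        calc ∏ l ∈ Finset.range k, specNorm (W l + U l)
            ≤ ∏ l ∈ Finset.range k, (t * specNorm (W l)) := by
              apply Finset.prod_le_prod (fun l _ => specNorm_nonneg _)
              intro l hl
              have hln : l < n := lt_of_lt_of_le (Finset.mem_range.mp hl) hkn'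
              have h1 := specNorm_add_le (W l) (U l)
              have h2 := hU l hln
              have h3 : t * specNorm (W l) = specNorm (W l) + 1 / n * specNorm (W l) := by
                rw [ht_def]; ring
              linarith
          _ = t ^ k * ∏ l ∈ Finset.range k, specNorm (W l) := by
              rw [Finset.prod_mul_distrib, Finset.prod_const, Finset.card_range]
      have hA : vnorm A ≤ vnorm x * (t ^ k * ∏ l ∈ Finset.range k, specNorm (W l)) :=
        (net_growth dims (fun l => W l + U l) k x).trans
          (mul_le_mul_of_nonneg_left hprod (vnorm_nonneg x))
      set P := ∏ l ∈ Finset.range k, specNorm (W l) with hP_def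
      set S := ∑ l ∈ Finset.range k, specNorm (U l) / specNorm (W l) with hS_def
      have hP0 : (0:ℝ) ≤ P := Finset.prod_nonneg fun l _ => specNorm_nonneg _
      have hS0 : (0:ℝ) ≤ S :=
        Finset.sum_nonneg fun l _ => div_nonneg (specNorm_nonneg _) (specNorm_nonneg _)
      have hS0' : (0:ℝ) ≤ S + specNorm (U k) / specNorm (W k) := by
        have := div_nonneg (specNorm_nonneg (U k)) (specNorm_nonneg (W k)); linarith
      have htk : t ^ k ≤ t ^ (k + 1) := by
        calc t ^ k = t ^ k * 1 := (mul_one _).symm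
          _ ≤ t ^ k * t := mul_le_mul_of_nonneg_left ht1 (pow_nonneg ht0 k)
          _ = t ^ (k + 1) := (pow_succ t k).symm
      calc vnorm (net dims (fun l => W l + U l) (k + 1) x - net dims W (k + 1) x)
          = vnorm ((W k).mulVec ((fun i => max (A i) 0) - fun i => max (B i) 0) +
              (U k).mulVec (fun i => max (A i) 0)) := by rw [hsplit]
        _ ≤ vnorm ((W k).mulVec ((fun i => max (A i) 0) - fun i => max (B i) 0)) +
              vnorm ((U k).mulVec (fun i => max (A i) 0)) := vnorm_add_le _ _
        _ ≤ specNorm (W k) * vnorm ((fun i => max (A i) 0) - fun i => max (B i) 0) +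
              specNorm (U k) * vnorm (fun i => max (A i) 0) :=
            add_le_add (vnorm_mulVec_le _ _) (vnorm_mulVec_le _ _)
        _ ≤ specNorm (W k) * vnorm (A - B) + specNorm (U k) * vnorm A :=
            add_le_add
              (mul_le_mul_of_nonneg_left (vnorm_relu_sub A B) (specNorm_nonneg _))
              (mul_le_mul_of_nonneg_left (vnorm_relu_le A) (specNorm_nonneg _))
        _ ≤ specNorm (W k) * (vnorm x * t ^ k * P * S) +
              specNorm (U k) * (vnorm x * (t ^ k * P)) :=
            add_le_add
              (mul_le_mul_of_nonneg_left ihk (specNorm_nonneg _))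
              (mul_le_mul_of_nonneg_left hA (specNorm_nonneg _))
        _ = vnorm x * t ^ k * (P * specNorm (W k)) *
              (S + specNorm (U k) / specNorm (W k)) := by
            field_simp
        _ ≤ vnorm x * t ^ (k + 1) * (P * specNorm (W k)) *
              (S + specNorm (U k) / specNorm (W k)) := by
            apply mul_le_mul_of_nonneg_right _ hS0'
            apply mul_le_mul_of_nonneg_right _ (mul_nonneg hP0 hWk.le)
            exact mul_le_mul_of_nonneg_left htk (vnorm_nonneg x)
        _ = vnorm x * t ^ (k + 1) * (∏ l ∈ Finset.range (k + 1), specNorm (W l)) *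
              ∑ l ∈ Finset.range (k + 1), specNorm (U l) / specNorm (W l) := by
            rw [Finset.prod_range_succ, Finset.sum_range_succ]
  have hkey := key n hn le_rfl
  have htn : t ^ n ≤ Real.exp 1 := by
    have h1 : t ≤ Real.exp (1 / n) := by
      have := Real.add_one_le_exp (1 / (n:ℝ)); rw [ht_def]; linarith
    calc t ^ n ≤ (Real.exp (1 / n)) ^ n := pow_le_pow_left₀ ht0 h1 n
      _ = Real.exp (n * (1 / n)) := (Real.exp_nat_mul _ n).symm
      _ = Real.exp 1 := by rw [mul_one_div, div_self (ne_of_gt hn0)]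
  have hP0 : (0:ℝ) ≤ ∏ l ∈ Finset.range n, specNorm (W l) :=
    Finset.prod_nonneg fun l _ => specNorm_nonneg _
  have hS0 : (0:ℝ) ≤ ∑ l ∈ Finset.range n, specNorm (U l) / specNorm (W l) :=
    Finset.sum_nonneg fun l _ => div_nonneg (specNorm_nonneg _) (specNorm_nonneg _)
  calc vnorm (net dims (fun l => W l + U l) n x - net dims W n x)
      ≤ vnorm x * t ^ n * (∏ l ∈ Finset.range n, specNorm (W l)) *
          ∑ l ∈ Finset.range n, specNorm (U l) / specNorm (W l) := hkey
    _ ≤ vnorm x * Real.exp 1 * (∏ l ∈ Finset.range n, specNorm (W l)) *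
          ∑ l ∈ Finset.range n, specNorm (U l) / specNorm (W l) := by
        exact mul_le_mul_of_nonneg_right
          (mul_le_mul_of_nonneg_right
            (mul_le_mul_of_nonneg_left htn (vnorm_nonneg x)) hP0) hS0
    _ = Real.exp 1 * vnorm x * (∏ l ∈ Finset.range n, specNorm (W l)) *
          ∑ l ∈ Finset.range n, specNorm (U l) / specNorm (W l) := by ring
end
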